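/- Let ε ∈ (0,1) and let c* : M → ℕ be an integer capacity function with c*(m) ≥ 1. Suppose a finite set J_i of n_i unit jobs is covered by a set M' of machines such that either (a) Σ_{m∈M'} c*(m) ≥ (1-ε)·n_i and c*(m) > 1/ε for all m ∈ M', or (b) Σ_{m∈M'} c*(m) ≥ n_i - 1/ε and c*(m) > 1/ε² for some m ∈ M'. Then with the scaled capacities c'(m) = ⌊c*(m)·(1/(1-ε) + ε)⌋ one has Σ_{m∈M'} c'(m) ≥ n_i. -/

import Mathlib

/-- A relatively or absolutely almost exact cover becomes an exact cover after
scaling the capacities by `1/(1-ε) + ε` and flooring. -/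
theorem stmt7 (ε : ℝ) (hε0 : 0 < ε) (hε1 : ε < 1)
    (M : Type*) [Fintype M] [DecidableEq M]
    (cstar : M → ℕ) (hc : ∀ m, 1 ≤ cstar m) (ni : ℕ) (M' : Finset M)
    (hcov :
      ((1 - ε) * (ni : ℝ) ≤ ∑ m ∈ M', (cstar m : ℝ) ∧
        ∀ m ∈ M', (1 : ℝ) / ε < (cstar m : ℝ)) ∨
      ((ni : ℝ) - 1 / ε ≤ ∑ m ∈ M', (cstar m : ℝ) ∧
        ∃ m ∈ M', (1 : ℝ) / ε ^ 2 < (cstar m : ℝ))) :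
    (ni : ℝ) ≤ ∑ m ∈ M', ((⌊(cstar m : ℝ) * (1 / (1 - ε) + ε)⌋ : ℤ) : ℝ) := by
  have h1ε : (0:ℝ) < 1 - ε := by linarith
  set κ : ℝ := 1 / (1 - ε) + ε with hκ
  have hκ1 : (1:ℝ) + ε ≤ κ := by
    have : (1:ℝ) ≤ 1 / (1 - ε) := by
      rw [le_div_iff₀ h1ε]; linarith
    rw [hκ]; linarith
  rcases hcov with ⟨hsum, hall⟩ | ⟨hsum, m0, hm0, hc0⟩
  · -- relative case
    have key : ∀ m ∈ M', (cstar m : ℝ) / (1 - ε) ≤ ((⌊(cstar m : ℝ) * κ⌋ : ℤ) : ℝ) := by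
      intro m hm
      have hcm := hall m hm
      have hce : (1:ℝ) < (cstar m : ℝ) * ε := by
        rw [div_lt_iff₀ hε0] at hcm
        linarith
      have h2 : (cstar m : ℝ) / (1 - ε) + 1 ≤ (cstar m : ℝ) * κ := by
        have : (cstar m : ℝ) * κ = (cstar m : ℝ) / (1 - ε) + (cstar m : ℝ) * ε := by
          rw [hκ]; ring
        linarith
      have hlt := Int.lt_floor_add_one ((cstar m : ℝ) / (1 - ε))
      have hmono : ⌊(cstar m : ℝ) / (1 - ε) + 1⌋ ≤ ⌊(cstar m : ℝ) * κ⌋ :=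
        Int.floor_le_floor h2
      rw [Int.floor_add_one] at hmono
      have := (@Int.cast_le ℝ _ _ _).mpr hmono
      push_cast at this ⊢
      linarith
    have hsum2 : ∑ m ∈ M', (cstar m : ℝ) / (1 - ε) ≤
        ∑ m ∈ M', ((⌊(cstar m : ℝ) * κ⌋ : ℤ) : ℝ) := Finset.sum_le_sum key
    rw [← Finset.sum_div] at hsum2
    have : (ni : ℝ) ≤ (∑ m ∈ M', (cstar m : ℝ)) / (1 - ε) := by
      rw [le_div_iff₀ h1ε]; linarith
    linarith
  · -- absolute case
    have hb : ∀ m ∈ M', (cstar m : ℝ) ≤ ((⌊(cstar m : ℝ) * κ⌋ : ℤ) : ℝ) := by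
      intro m _
      have h1 : (cstar m : ℝ) ≤ (cstar m : ℝ) * κ :=
        le_mul_of_one_le_right (by positivity) (by linarith)
      have : ((cstar m : ℕ) : ℤ) ≤ ⌊(cstar m : ℝ) * κ⌋ := by
        rw [Int.le_floor]; push_cast; exact h1
      exact_mod_cast this
    have hb0 : (cstar m0 : ℝ) + 1 / ε - 1 < ((⌊(cstar m0 : ℝ) * κ⌋ : ℤ) : ℝ) := by
      have h1 := Int.sub_one_lt_floor ((cstar m0 : ℝ) * κ)
      have h2 : (cstar m0 : ℝ) * (1 + ε) ≤ (cstar m0 : ℝ) * κ :=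
        mul_le_mul_of_nonneg_left hκ1 (by positivity)
      have h3 : 1 / ε < (cstar m0 : ℝ) * ε := by
        have := mul_lt_mul_of_pos_right hc0 hε0
        have he : 1 / ε ^ 2 * ε = 1 / ε := by field_simp
        linarith [he ▸ this]
      nlinarith
    have e1 := (Finset.add_sum_erase M' (fun m => ((⌊(cstar m : ℝ) * κ⌋ : ℤ) : ℝ)) hm0).symm
    have e2 := (Finset.add_sum_erase M' (fun m => (cstar m : ℝ)) hm0).symm
    have h4 : ∑ m ∈ M'.erase m0, (cstar m : ℝ) ≤
        ∑ m ∈ M'.erase m0, ((⌊(cstar m : ℝ) * κ⌋ : ℤ) : ℝ) :=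
      Finset.sum_le_sum fun m hm => hb m (Finset.mem_of_mem_erase hm)
    have hfin : (ni : ℝ) - 1 < ∑ m ∈ M', ((⌊(cstar m : ℝ) * κ⌋ : ℤ) : ℝ) := by
      rw [e1]
      rw [e2] at hsum
      linarith
    have hint : (ni : ℤ) ≤ ∑ m ∈ M', ⌊(cstar m : ℝ) * κ⌋ := by
      have : ((ni : ℤ) : ℝ) - 1 < ((∑ m ∈ M', ⌊(cstar m : ℝ) * κ⌋ : ℤ) : ℝ) := by
        push_cast
        exact_mod_cast hfin
      have h5 : (ni : ℤ) - 1 < ∑ m ∈ M', ⌊(cstar m : ℝ) * κ⌋ := by exact_mod_cast this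
      omega
    have : ((ni : ℤ) : ℝ) ≤ ((∑ m ∈ M', ⌊(cstar m : ℝ) * κ⌋ : ℤ) : ℝ) := by exact_mod_cast hint
    push_cast at this
    exact_mod_cast this
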